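/- For each θ ∈ ℝ, the numerical range of the 2×2 matrix Φ(θ) = [[e^{iθ}, -1],[2e^{iθ}, e^{iθ}]] is a closed elliptical disk centered at e^{iθ}, and every point z in W(Φ(θ)) satisfies H(Re z, Im z; θ) ≤ 0, where H(X,Y;θ) = (16X² - 16Y² - 40X + 16)cos θ + (32XY - 40Y)sin θ + (20X² + 20Y² - 32X + 11) - 0; moreover the boundary of W(Φ(θ)) is {(X,Y) : (20+16cos θ)(X-cos θ)² + (20-16cos θ)(Y-sin θ)² + 32 sin θ (X-cos θ)(Y-sin θ) = 9}. -/

import Mathlib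

open Complex Matrix

/-- The numerical range of a square complex matrix. -/
def numericalRange {k : Type*} [Fintype k] (M : Matrix k k ℂ) : Set ℂ :=
  {z | ∃ x : k → ℂ, (∑ i, ‖x i‖ ^ 2 = 1) ∧ z = dotProduct (star x) (M.mulVec x)}

/-- The symbol matrix Φ(θ). -/
noncomputable def PhiMat (θ : ℝ) : Matrix (Fin 2) (Fin 2) ℂ :=
  Matrix.of ![![Complex.exp (I * θ), -1], ![2 * Complex.exp (I * θ), Complex.exp (I * θ)]]

/-- H(X,Y;θ). -/
noncomputable def Hfun (X Y θ : ℝ) : ℝ :=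
  (16 * X ^ 2 - 16 * Y ^ 2 - 40 * X + 16) * Real.cos θ
    + (32 * X * Y - 40 * Y) * Real.sin θ
    + (20 * X ^ 2 + 20 * Y ^ 2 - 32 * X + 11)

/-- The real-linear part of the affine map parametrizing the numerical range. -/
noncomputable def Lequiv (θ : ℝ) : ℂ ≃ₗ[ℝ] ℂ where
  toFun a := 2 * Complex.exp (I*θ) * a - (starRingEnd ℂ) a
  invFun w := (2 * Complex.exp (-(I*θ)) * w + (starRingEnd ℂ) w) / 3
  map_add' a b := by simp; ring
  map_smul' r a := by simp [Complex.real_smul]; ring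
  left_inv a := by
    have h1 : (starRingEnd ℂ) (Complex.exp (I*θ)) = Complex.exp (-(I*θ)) := by
      rw [← Complex.exp_conj]; simp
    have h2 : Complex.exp (I*θ) * Complex.exp (-(I*θ)) = 1 := by
      rw [← Complex.exp_add]; simp
    simp only [map_sub, _root_.map_mul, h1, Complex.conj_conj, Complex.conj_ofNat]
    field_simp
    linear_combination 4 * a * h2
  right_inv w := by
    have h1 : (starRingEnd ℂ) (Complex.exp (-(I*θ))) = Complex.exp (I*θ) := by
      rw [← Complex.exp_conj]; simp
    have h2 : Complex.exp (I*θ) * Complex.exp (-(I*θ)) = 1 := by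
      rw [← Complex.exp_add]; simp
    simp only [map_div₀, map_add, _root_.map_mul, h1, Complex.conj_conj, Complex.conj_ofNat,
      map_ofNat]
    field_simp
    linear_combination 4 * w * h2

/-- The affine parametrization a ↦ e^{iθ} + 2e^{iθ}a - conj a. -/
noncomputable def gmap (θ : ℝ) (a : ℂ) : ℂ :=
  Complex.exp (I * θ) + (2 * Complex.exp (I * θ) * a - (starRingEnd ℂ) a)

lemma range_eq (θ : ℝ) :
    numericalRange (PhiMat θ) = gmap θ '' Metric.closedBall 0 (1/2) := by
  ext z
  constructor
  · rintro ⟨x, hx, rfl⟩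
    refine ⟨(starRingEnd ℂ) (x 1) * x 0, ?_, ?_⟩
    · rw [Metric.mem_closedBall, dist_zero_right]
      have h0 : ‖x 0‖ ^ 2 + ‖x 1‖ ^ 2 = 1 := by
        simpa [Fin.sum_univ_two] using hx
      have : ‖(starRingEnd ℂ) (x 1) * x 0‖ = ‖x 1‖ * ‖x 0‖ := by
        simp [norm_mul]
      rw [this]
      nlinarith [norm_nonneg (x 0), norm_nonneg (x 1), sq_nonneg (‖x 0‖ - ‖x 1‖)]
    · have h0 : ‖x 0‖ ^ 2 + ‖x 1‖ ^ 2 = 1 := by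
        simpa [Fin.sum_univ_two] using hx
      have h1 : (starRingEnd ℂ) (x 0) * x 0 + (starRingEnd ℂ) (x 1) * x 1 = 1 := by
        have e0 : (starRingEnd ℂ) (x 0) * x 0 = ((‖x 0‖ ^ 2 : ℝ) : ℂ) := by
          rw [Complex.conj_mul']; norm_cast
        have e1 : (starRingEnd ℂ) (x 1) * x 1 = ((‖x 1‖ ^ 2 : ℝ) : ℂ) := by
          rw [Complex.conj_mul']; norm_cast
        rw [e0, e1, ← Complex.ofReal_add, h0, Complex.ofReal_one]
      simp only [dotProduct, mulVec, PhiMat, Fin.sum_univ_two, Matrix.of_apply,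
        Matrix.cons_val', Matrix.cons_val_zero, Matrix.cons_val_one, Matrix.head_cons,
        Matrix.empty_val', Matrix.cons_val_fin_one, Matrix.head_fin_const, Pi.star_apply,
        RCLike.star_def, gmap]
      simp only [_root_.map_mul, Complex.conj_conj]
      linear_combination (-(Complex.exp (I * ↑θ))) * h1
  · rintro ⟨a, ha, rfl⟩
    rw [Metric.mem_closedBall, dist_zero_right] at ha
    set t : ℝ := Real.sqrt (1 - 4 * ‖a‖ ^ 2) with ht
    have hA : ‖a‖ ^ 2 ≤ 1/4 := by nlinarith [norm_nonneg a]
    have ht0 : 0 ≤ t := Real.sqrt_nonneg _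
    have ht2 : t ^ 2 = 1 - 4 * ‖a‖ ^ 2 := Real.sq_sqrt (by nlinarith)
    set r : ℝ := Real.sqrt ((1 + t)/2) with hr
    have hr2 : r ^ 2 = (1 + t)/2 := Real.sq_sqrt (by nlinarith)
    have hrpos : 0 < r := Real.sqrt_pos.mpr (by nlinarith)
    have hrne : (r : ℂ) ≠ 0 := by exact_mod_cast hrpos.ne'
    refine ⟨![a / (r : ℂ), (r : ℂ)], ?_, ?_⟩
    · simp only [Fin.sum_univ_two, Matrix.cons_val_zero, Matrix.cons_val_one, Matrix.head_cons]
      rw [norm_div]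
      have : ‖(r:ℂ)‖ = r := by
        rw [Complex.norm_real, Real.norm_of_nonneg hrpos.le]
      rw [this, div_pow]
      field_simp
      linear_combination (1/4 : ℝ) * ht2 + (r^2 + (1+t)/2 - 1) * hr2
    · have hre : ‖a‖^2 + r^2 * r^2 = r^2 := by
        linear_combination (1/4 : ℝ) * ht2 + (r^2 + (1+t)/2 - 1) * hr2
      have hkey : (starRingEnd ℂ) a * a + ((r:ℂ))^2 * ((r:ℂ))^2 = ((r:ℂ))^2 := by
        have hnormsq : (starRingEnd ℂ) a * a = ((‖a‖ ^ 2 : ℝ) : ℂ) := by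
          rw [Complex.conj_mul']; norm_cast
        rw [hnormsq]
        exact_mod_cast congrArg (Complex.ofReal) hre
      simp only [dotProduct, mulVec, PhiMat, Fin.sum_univ_two, Matrix.of_apply,
        Matrix.cons_val', Matrix.cons_val_zero, Matrix.cons_val_one, Matrix.head_cons,
        Matrix.empty_val', Matrix.cons_val_fin_one, Matrix.head_fin_const, Pi.star_apply,
        RCLike.star_def, gmap]
      have hc : (starRingEnd ℂ) ((r:ℂ)) = (r:ℂ) := Complex.conj_ofReal r
      have hca : (starRingEnd ℂ) (a / (r:ℂ)) = (starRingEnd ℂ) a / (r:ℂ) := by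
        rw [map_div₀, hc]
      rw [hc, hca]
      field_simp
      linear_combination (-(Complex.exp (I * ↑θ))) * hkey

/-- The affine parametrization as a homeomorphism. -/
noncomputable def Ghomeo (θ : ℝ) : ℂ ≃ₜ ℂ :=
  ((Lequiv θ).toContinuousLinearEquiv.toHomeomorph).trans
    (Homeomorph.addLeft (Complex.exp (I * θ)))

lemma Ghomeo_eq (θ : ℝ) : ⇑(Ghomeo θ) = gmap θ := rfl

lemma exp_eq (θ : ℝ) :
    Complex.exp (I * θ) = (Real.cos θ : ℂ) + (Real.sin θ : ℂ) * I := by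
  rw [mul_comm, Complex.exp_mul_I, ← Complex.ofReal_cos, ← Complex.ofReal_sin]

lemma gmap_re (θ : ℝ) (a : ℂ) :
    (gmap θ a).re = Real.cos θ + (2 * Real.cos θ - 1) * a.re - 2 * Real.sin θ * a.im := by
  simp only [gmap, exp_eq, Complex.add_re, Complex.sub_re, Complex.mul_re, Complex.mul_im,
    Complex.add_im, Complex.I_re, Complex.I_im, Complex.ofReal_re, Complex.ofReal_im,
    Complex.conj_re, Complex.conj_im, Complex.re_ofNat, Complex.im_ofNat]
  ring

lemma gmap_im (θ : ℝ) (a : ℂ) :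
    (gmap θ a).im = Real.sin θ + 2 * Real.sin θ * a.re + (2 * Real.cos θ + 1) * a.im := by
  simp only [gmap, exp_eq, Complex.add_re, Complex.sub_re, Complex.mul_re, Complex.mul_im,
    Complex.add_im, Complex.sub_im, Complex.I_re, Complex.I_im, Complex.ofReal_re,
    Complex.ofReal_im, Complex.conj_re, Complex.conj_im, Complex.re_ofNat, Complex.im_ofNat]
  ring

lemma keyH (θ u v : ℝ) :
    Hfun (Real.cos θ + (2 * Real.cos θ - 1) * u - 2 * Real.sin θ * v)
      (Real.sin θ + 2 * Real.sin θ * u + (2 * Real.cos θ + 1) * v) θ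
      = 36 * (u ^ 2 + v ^ 2) - 9 := by
  have h := Real.sin_sq_add_cos_sq θ
  simp only [Hfun]
  linear_combination (-20 + 16*v^2 - 32*u + 16*u^2 - 64*Real.sin θ*v - 128*Real.sin θ*u*v
    + 16*Real.cos θ - 64*Real.cos θ*v^2 + 64*Real.cos θ*u + 64*Real.cos θ*u^2) * h

lemma keyQ (θ u v : ℝ) :
    (20 + 16 * Real.cos θ) * ((Real.cos θ + (2 * Real.cos θ - 1) * u - 2 * Real.sin θ * v)
        - Real.cos θ) ^ 2
      + (20 - 16 * Real.cos θ) * ((Real.sin θ + 2 * Real.sin θ * u + (2 * Real.cos θ + 1) * v)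
        - Real.sin θ) ^ 2
      + 32 * Real.sin θ * ((Real.cos θ + (2 * Real.cos θ - 1) * u - 2 * Real.sin θ * v)
        - Real.cos θ) * ((Real.sin θ + 2 * Real.sin θ * u + (2 * Real.cos θ + 1) * v)
        - Real.sin θ)
      = 36 * (u ^ 2 + v ^ 2) := by
  have h := Real.sin_sq_add_cos_sq θ
  linear_combination (16*v^2 + 16*u^2 - 128*Real.sin θ*u*v - 64*Real.cos θ*v^2
    + 64*Real.cos θ*u^2) * h

lemma norm_sq_eq (a : ℂ) : ‖a‖ ^ 2 = a.re ^ 2 + a.im ^ 2 := by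
  rw [Complex.sq_norm, Complex.normSq_apply]; ring

theorem numericalRange_PhiMat (θ : ℝ) :
    IsClosed (numericalRange (PhiMat θ)) ∧
    Convex ℝ (numericalRange (PhiMat θ)) ∧
    (∀ z : ℂ, z ∈ numericalRange (PhiMat θ) ↔
        2 * Complex.exp (I * θ) - z ∈ numericalRange (PhiMat θ)) ∧
    (∀ z ∈ numericalRange (PhiMat θ), Hfun z.re z.im θ ≤ 0) ∧
    frontier (numericalRange (PhiMat θ)) =
      {z : ℂ | (20 + 16 * Real.cos θ) * (z.re - Real.cos θ) ^ 2
          + (20 - 16 * Real.cos θ) * (z.im - Real.sin θ) ^ 2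
          + 32 * Real.sin θ * (z.re - Real.cos θ) * (z.im - Real.sin θ) = 9} := by
  have hW : numericalRange (PhiMat θ) = (Ghomeo θ) '' Metric.closedBall 0 (1/2) := by
    rw [range_eq θ, Ghomeo_eq]
  have hsym : ∀ z ∈ numericalRange (PhiMat θ),
      2 * Complex.exp (I * θ) - z ∈ numericalRange (PhiMat θ) := by
    rw [hW]
    rintro z ⟨a, ha, rfl⟩
    refine ⟨-a, by simpa using ha, ?_⟩
    rw [Ghomeo_eq] at *
    simp only [gmap, map_neg]
    ring
  refine ⟨?_, ?_, ?_, ?_, ?_⟩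
  · rw [hW]
    exact ((isCompact_closedBall (0:ℂ) (1/2)).image (Ghomeo θ).continuous).isClosed
  · rw [hW]
    have himg : (Ghomeo θ) '' Metric.closedBall 0 (1/2)
        = (fun w => Complex.exp (I * θ) + w) '' ((Lequiv θ) '' Metric.closedBall 0 (1/2)) := by
      rw [Set.image_image]; rfl
    rw [himg]
    exact ((convex_closedBall (0:ℂ) (1/2)).linear_image (Lequiv θ).toLinearMap).translate _
  · intro z
    refine ⟨hsym z, fun h => ?_⟩
    have := hsym _ h
    simpa using this
  · rw [hW]
    rintro z ⟨a, ha, rfl⟩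
    rw [Metric.mem_closedBall, dist_zero_right] at ha
    rw [Ghomeo_eq, gmap_re, gmap_im, keyH]
    have : a.re ^ 2 + a.im ^ 2 ≤ 1/4 := by
      rw [← norm_sq_eq]; nlinarith [norm_nonneg a]
    linarith
  · rw [hW, ← Homeomorph.image_frontier,
      frontier_closedBall (0:ℂ) (by norm_num : (1/2:ℝ) ≠ 0)]
    ext z
    simp only [Set.mem_image, Set.mem_setOf_eq]
    constructor
    · rintro ⟨a, ha, rfl⟩
      rw [mem_sphere_zero_iff_norm] at ha
      rw [Ghomeo_eq, gmap_re, gmap_im, keyQ]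
      have : a.re ^ 2 + a.im ^ 2 = 1/4 := by
        rw [← norm_sq_eq, ha]; norm_num
      rw [this]; norm_num
    · intro hz
      refine ⟨(Ghomeo θ).symm z, ?_, (Ghomeo θ).apply_symm_apply z⟩
      rw [mem_sphere_zero_iff_norm]
      set a := (Ghomeo θ).symm z with haz
      have hza : Ghomeo θ a = z := (Ghomeo θ).apply_symm_apply z
      rw [← hza, Ghomeo_eq, gmap_re, gmap_im, keyQ] at hz
      have h4 : ‖a‖ ^ 2 = 1/4 := by rw [norm_sq_eq]; linarith
      rw [← Real.sqrt_sq (norm_nonneg a), h4,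
        show (1/4:ℝ) = (1/2)^2 by norm_num, Real.sqrt_sq (by norm_num)]
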